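/- Let n, k, t be positive integers with k ≥ t + 1 and n ≥ 2k, and let V be an n-dimensional space over F_q. Suppose F ⊆ {k-subspaces of V} is almost t-intersecting and A is a subspace of V with dim(A) < τ_t(F) ≤ k. Then |F_A| ≤ [k-t+1 choose 1]_q^(τ_t(F) - dim A) [n - τ_t(F) choose k - τ_t(F)]_q + Σ_{i=0}^{τ_t(F) - dim A - 1} [k-t+1 choose 1]_q^i, where F_A = {F ∈ F : A ⊆ F}. -/

import Mathlib

open Module

/-- A family of subspaces is almost `t`-intersecting if each member meets all but at
most one member in dimension at least `t`. -/
def AlmostTIntersecting {K V : Type*} [Field K] [AddCommGroup V] [Module K V]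
    (t : ℕ) (F : Set (Submodule K V)) : Prop :=
  ∀ A ∈ F, {B | B ∈ F ∧ finrank K ↥(A ⊓ B) < t}.Subsingleton

/-- `W` is a `t`-cover of the family `F`. -/
def IsTCover {K V : Type*} [Field K] [AddCommGroup V] [Module K V]
    (t : ℕ) (F : Set (Submodule K V)) (W : Submodule K V) : Prop :=
  ∀ A ∈ F, t ≤ finrank K ↥(W ⊓ A)

/-- The `t`-covering number: the minimum dimension of a `t`-cover. -/
noncomputable def tauT {K V : Type*} [Field K] [AddCommGroup V] [Module K V]
    (t : ℕ) (F : Set (Submodule K V)) : ℕ :=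
  sInf {d | ∃ W : Submodule K V, finrank K ↥W = d ∧ IsTCover t F W}

/-- The Gaussian binomial coefficient `[n choose k]_q`, via the product formula
`∏ i < k, (q^(n-i) - 1)/(q^(k-i) - 1)` (the division is exact for `q ≥ 2`, `k ≤ n`). -/
def gaussBinom (q n k : ℕ) : ℕ :=
  (∏ i ∈ Finset.range k, (q ^ (n - i) - 1)) / (∏ i ∈ Finset.range k, (q ^ (k - i) - 1))

section Aux
set_option linter.unusedSectionVars false

open Finset

variable {K V : Type*} [Field K] [Fintype K] [AddCommGroup V] [Module K V]
  [FiniteDimensional K V]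

lemma aux_finrank_sup_span {A : Submodule K V} {x : V} (hx : x ∉ A) :
    finrank K ↥(A ⊔ Submodule.span K {x}) = finrank K ↥A + 1 := by
  have hx0 : x ≠ 0 := fun h => hx (h ▸ A.zero_mem)
  have hinf : A ⊓ Submodule.span K {x} = ⊥ := by
    rw [Submodule.eq_bot_iff]
    rintro y ⟨hyA, hyx⟩
    rcases Submodule.mem_span_singleton.1 hyx with ⟨c, rfl⟩
    rcases eq_or_ne c 0 with rfl | hc
    · simp
    · exfalso
      have h1 : (c⁻¹ * c) • x ∈ A := by rw [mul_smul]; exact A.smul_mem _ hyA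
      rw [inv_mul_cancel₀ hc, one_smul] at h1
      exact hx h1
  have h2 := Submodule.finrank_sup_add_finrank_inf_eq A (Submodule.span K {x})
  rw [hinf, finrank_span_singleton hx0] at h2
  simp only [finrank_bot] at h2
  omega

lemma aux_exists_between (m : ℕ) (D W : Submodule K V) (hDW : D ≤ W)
    (hm : finrank K ↥D + m ≤ finrank K ↥W) :
    ∃ U, D ≤ U ∧ U ≤ W ∧ finrank K ↥U = finrank K ↥D + m := by
  induction m with
  | zero => exact ⟨D, le_refl D, hDW, rfl⟩
  | succ m ih =>
    obtain ⟨U, hDU, hUW, hU⟩ := ih (by omega)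
    have hne : ¬ W ≤ U := fun h => by
      have := Submodule.finrank_mono h; omega
    rw [SetLike.le_def] at hne; push_neg at hne
    obtain ⟨x, hxW, hxU⟩ := hne
    refine ⟨U ⊔ Submodule.span K {x}, le_trans hDU le_sup_left,
      sup_le hUW ((Submodule.span_singleton_le_iff_mem x W).2 hxW), ?_⟩
    rw [aux_finrank_sup_span hxU, hU]
    omega

lemma aux_card_submod (C : Submodule K V) :
    (C : Set V).ncard = Fintype.card K ^ finrank K ↥C := by
  classical
  have hfin : Finite ↥C := Module.finite_of_finite K
  have hft : Fintype ↥C := Fintype.ofFinite _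
  have h1 : Nat.card ↥C = Fintype.card K ^ finrank K ↥C := by
    rw [Nat.card_eq_fintype_card]; exact card_eq_pow_finrank
  rw [← Nat.card_coe_set_eq, ← h1]
  exact Nat.card_congr (Equiv.subtypeEquivRight (fun x => SetLike.mem_coe))

lemma aux_card_diff (B C : Submodule K V) :
    {x : V | x ∈ C ∧ x ∉ B}.ncard =
      Fintype.card K ^ finrank K ↥C - Fintype.card K ^ finrank K ↥(B ⊓ C) := by
  haveI : Finite V := Module.finite_of_finite K
  have hset : {x : V | x ∈ C ∧ x ∉ B} =
      (C : Set V) \ ((B ⊓ C : Submodule K V) : Set V) := by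
    ext x; simp only [Set.mem_setOf_eq, Set.mem_diff, SetLike.mem_coe, Submodule.mem_inf]
    tauto
  have hsub : ((B ⊓ C : Submodule K V) : Set V) ⊆ (C : Set V) := by
    intro x hx
    simp only [SetLike.mem_coe, Submodule.mem_inf] at hx ⊢
    exact hx.2
  rw [hset, Set.ncard_diff hsub (Set.toFinite _), aux_card_submod, aux_card_submod]

lemma aux_bridge {α : Type*} [Fintype α] (p : α → Prop) [DecidablePred p] :
    #{x ∈ (univ : Finset α) | p x} = {x : α | p x}.ncard := by
  rw [← Set.ncard_coe_finset]
  congr 1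
  ext x
  simp

open Classical in
lemma aux_count {q n k : ℕ} (hq : Fintype.card K = q) (hn : finrank K V = n) :
    ∀ (r : ℕ) (A : Submodule K V), finrank K ↥A + r = k →
      {F : Submodule K V | finrank K ↥F = k ∧ A ≤ F}.ncard *
          ∏ i ∈ range r, (q ^ k - q ^ (finrank K ↥A + i)) ≤
        ∏ i ∈ range r, (q ^ n - q ^ (finrank K ↥A + i)) := by
  haveI : Finite V := Module.finite_of_finite K
  haveI : Fintype V := Fintype.ofFinite V
  haveI : Finite (Submodule K V) :=
    Finite.of_injective (fun W => (W : Set V)) SetLike.coe_injective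
  haveI : Fintype (Submodule K V) := Fintype.ofFinite _
  intro r
  induction r with
  | zero =>
    intro A hA
    simp only [range_zero, prod_empty, mul_one]
    have hsub : {F : Submodule K V | finrank K ↥F = k ∧ A ≤ F} ⊆ {A} := by
      rintro F ⟨hFk, hAF⟩
      simp only [Set.mem_singleton_iff]
      exact (Submodule.eq_of_le_of_finrank_eq hAF (by omega)).symm
    calc {F : Submodule K V | finrank K ↥F = k ∧ A ≤ F}.ncard
        ≤ ({A} : Set (Submodule K V)).ncard := Set.ncard_le_ncard hsub (Set.toFinite _)
      _ = 1 := Set.ncard_singleton A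
  | succ r ih =>
    intro A hA
    obtain ⟨a, ha⟩ : ∃ a, a = finrank K ↥A := ⟨_, rfl⟩
    rw [← ha] at hA ⊢
    set N : Finset (Submodule K V) :=
      {F ∈ (univ : Finset (Submodule K V)) | finrank K ↥F = k ∧ A ≤ F} with hN
    have hNcard : {F : Submodule K V | finrank K ↥F = k ∧ A ≤ F}.ncard = #N := by
      rw [hN, aux_bridge]
    set T : Finset V := {x ∈ (univ : Finset V) | x ∈ (⊤ : Submodule K V) ∧ x ∉ A} with hT
    have hTcard : #T = q ^ n - q ^ a := by
      rw [hT, aux_bridge, aux_card_diff A ⊤, hq, inf_top_eq, finrank_top, hn, ← ha]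
    have hcount : ∀ F ∈ N, #{x ∈ T | x ∈ F} = q ^ k - q ^ a := by
      intro F hF
      rw [hN, mem_filter] at hF
      have heq : {x ∈ T | x ∈ F} = {x ∈ (univ : Finset V) | x ∈ F ∧ x ∉ A} := by
        ext x
        simp only [hT, mem_filter, mem_univ, true_and, Submodule.mem_top]
        tauto
      rw [heq, aux_bridge, aux_card_diff A F, hq, inf_of_le_left hF.2.2, hF.2.1, ← ha]
    have key : #N * (q ^ k - q ^ a) = ∑ x ∈ T, #{F ∈ N | x ∈ F} := by
      calc #N * (q ^ k - q ^ a) = ∑ _F ∈ N, (q ^ k - q ^ a) := by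
            rw [sum_const, smul_eq_mul]
        _ = ∑ F ∈ N, #{x ∈ T | x ∈ F} := (sum_congr rfl hcount).symm
        _ = ∑ x ∈ T, #{F ∈ N | x ∈ F} := by
            simp_rw [card_filter]
            exact sum_comm
    have hstep : ∀ x ∈ T, #{F ∈ N | x ∈ F} * ∏ i ∈ range r, (q ^ k - q ^ (a + 1 + i)) ≤
        ∏ i ∈ range r, (q ^ n - q ^ (a + 1 + i)) := by
      intro x hx
      rw [hT, mem_filter] at hx
      have hxA : x ∉ A := hx.2.2
      have hA' : finrank K ↥(A ⊔ Submodule.span K {x}) = a + 1 := by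
        rw [aux_finrank_sup_span hxA, ← ha]
      have hsub : {F ∈ N | x ∈ F} ⊆
          {F ∈ (univ : Finset (Submodule K V)) |
            finrank K ↥F = k ∧ A ⊔ Submodule.span K {x} ≤ F} := by
        intro F hF
        simp only [hN, mem_filter, mem_univ, true_and] at hF ⊢
        exact ⟨hF.1.1, sup_le hF.1.2 ((Submodule.span_singleton_le_iff_mem x F).2 hF.2)⟩
      have hih := ih (A ⊔ Submodule.span K {x}) (by rw [hA']; omega)
      rw [hA'] at hih
      refine le_trans (Nat.mul_le_mul_right _ (card_le_card hsub)) ?_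
      rw [aux_bridge]
      exact hih
    have hidx : ∀ b : ℕ, a + (b + 1) = a + 1 + b := fun b => by omega
    have hprodk : (∏ i ∈ range r, (q ^ k - q ^ (a + (i + 1)))) =
        ∏ i ∈ range r, (q ^ k - q ^ (a + 1 + i)) :=
      prod_congr rfl (fun i _ => by rw [hidx i])
    have hprodn : (∏ i ∈ range r, (q ^ n - q ^ (a + (i + 1)))) =
        ∏ i ∈ range r, (q ^ n - q ^ (a + 1 + i)) :=
      prod_congr rfl (fun i _ => by rw [hidx i])
    calc {F : Submodule K V | finrank K ↥F = k ∧ A ≤ F}.ncard *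
            ∏ i ∈ range (r + 1), (q ^ k - q ^ (a + i))
        = #N * ((∏ i ∈ range r, (q ^ k - q ^ (a + (i + 1)))) * (q ^ k - q ^ (a + 0))) := by
          rw [hNcard, prod_range_succ' (fun i => q ^ k - q ^ (a + i)) r]
      _ = (#N * (q ^ k - q ^ a)) * ∏ i ∈ range r, (q ^ k - q ^ (a + 1 + i)) := by
          rw [hprodk, add_zero]
          ring
      _ = (∑ x ∈ T, #{F ∈ N | x ∈ F}) * ∏ i ∈ range r, (q ^ k - q ^ (a + 1 + i)) := by
          rw [key]
      _ = ∑ x ∈ T, #{F ∈ N | x ∈ F} * ∏ i ∈ range r, (q ^ k - q ^ (a + 1 + i)) := by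
          rw [sum_mul]
      _ ≤ ∑ _x ∈ T, ∏ i ∈ range r, (q ^ n - q ^ (a + 1 + i)) := sum_le_sum hstep
      _ = #T * ∏ i ∈ range r, (q ^ n - q ^ (a + 1 + i)) := by rw [sum_const, smul_eq_mul]
      _ = (∏ i ∈ range r, (q ^ n - q ^ (a + (i + 1)))) * (q ^ n - q ^ (a + 0)) := by
          rw [hTcard, hprodn, add_zero]
          ring
      _ = ∏ i ∈ range (r + 1), (q ^ n - q ^ (a + i)) := (prod_range_succ' (fun i => q ^ n - q ^ (a + i)) r).symm
open Classical in
lemma aux_count_div {q n k τ : ℕ} (hq : Fintype.card K = q) (hn : finrank K V = n)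
    (hq2 : 2 ≤ q) (hτk : τ ≤ k) (hkn : k ≤ n) (A : Submodule K V) (hA : finrank K ↥A = τ) :
    {F : Submodule K V | finrank K ↥F = k ∧ A ≤ F}.ncard ≤ gaussBinom q (n - τ) (k - τ) := by
  have h := aux_count (k := k) hq hn (k - τ) A (by omega)
  rw [hA] at h
  have hfac1 : ∀ i ∈ range (k - τ), q ^ k - q ^ (τ + i) = q ^ (τ + i) * (q ^ (k - τ - i) - 1) := by
    intro i hi
    rw [mem_range] at hi
    rw [Nat.mul_sub, mul_one, ← pow_add]
    congr 2
    omega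
  have hfac2 : ∀ i ∈ range (k - τ), q ^ n - q ^ (τ + i) = q ^ (τ + i) * (q ^ (n - τ - i) - 1) := by
    intro i hi
    rw [mem_range] at hi
    rw [Nat.mul_sub, mul_one, ← pow_add]
    congr 2
    omega
  rw [prod_congr rfl hfac1, prod_congr rfl hfac2, prod_mul_distrib, prod_mul_distrib] at h
  have hP : 0 < ∏ i ∈ range (k - τ), q ^ (τ + i) :=
    prod_pos (fun i _ => pow_pos (by omega) _)
  have hD1 : 0 < ∏ i ∈ range (k - τ), (q ^ (k - τ - i) - 1) := by
    apply prod_pos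
    intro i hi
    rw [mem_range] at hi
    have h1 : 1 < q ^ (k - τ - i) := Nat.one_lt_pow (by omega) (by omega)
    omega
  have h2 : {F : Submodule K V | finrank K ↥F = k ∧ A ≤ F}.ncard *
      ∏ i ∈ range (k - τ), (q ^ (k - τ - i) - 1) ≤
        ∏ i ∈ range (k - τ), (q ^ (n - τ - i) - 1) := by
    apply Nat.le_of_mul_le_mul_left ?_ hP
    calc (∏ i ∈ range (k - τ), q ^ (τ + i)) *
          ({F : Submodule K V | finrank K ↥F = k ∧ A ≤ F}.ncard *
            ∏ i ∈ range (k - τ), (q ^ (k - τ - i) - 1))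
        = {F : Submodule K V | finrank K ↥F = k ∧ A ≤ F}.ncard *
            ((∏ i ∈ range (k - τ), q ^ (τ + i)) *
              ∏ i ∈ range (k - τ), (q ^ (k - τ - i) - 1)) := by ring
      _ ≤ (∏ i ∈ range (k - τ), q ^ (τ + i)) *
            ∏ i ∈ range (k - τ), (q ^ (n - τ - i) - 1) := h
  simp only [gaussBinom]
  rw [Nat.le_div_iff_mul_le hD1]
  exact h2

open Classical in
lemma aux_main {q n k t : ℕ} (hq : Fintype.card K = q) (hn : finrank K V = n)
    (hk : 0 < k) (ht : 0 < t) (htk : t + 1 ≤ k) (hnk : 2 * k ≤ n)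
    (F : Set (Submodule K V)) (hdim : ∀ A ∈ F, finrank K ↥A = k)
    (hF : AlmostTIntersecting t F) (htau : tauT t F ≤ k) :
    ∀ (m : ℕ) (A : Submodule K V), finrank K ↥A + m = tauT t F →
      {B | B ∈ F ∧ A ≤ B}.ncard ≤
        gaussBinom q (k - t + 1) 1 ^ m * gaussBinom q (n - tauT t F) (k - tauT t F) +
          ∑ i ∈ range m, gaussBinom q (k - t + 1) 1 ^ i := by
  have hq2 : 2 ≤ q := by rw [← hq]; exact Fintype.one_lt_card
  haveI : Finite V := Module.finite_of_finite K
  haveI : Fintype V := Fintype.ofFinite V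
  haveI : Finite (Submodule K V) :=
    Finite.of_injective (fun W => (W : Set V)) SetLike.coe_injective
  haveI : Fintype (Submodule K V) := Fintype.ofFinite _
  set τ := tauT t F with hτdef
  set c := gaussBinom q (k - t + 1) 1 with hcdef
  set G := gaussBinom q (n - τ) (k - τ) with hGdef
  have hbiUnion : ∀ (S : Finset (Submodule K V)),
      (⋃ A' ∈ S, {B | B ∈ F ∧ A' ≤ B}).ncard ≤ ∑ A' ∈ S, {B | B ∈ F ∧ A' ≤ B}.ncard := by
    intro S
    induction S using Finset.induction with
    | empty => simp
    | insert _ _ hnotmem ihS =>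
      rw [Finset.set_biUnion_insert, sum_insert hnotmem]
      exact le_trans (Set.ncard_union_le _ _) (Nat.add_le_add_left ihS _)
  intro m
  induction m with
  | zero =>
    intro A hA
    simp only [pow_zero, one_mul, range_zero, sum_empty, add_zero]
    have hsub : {B | B ∈ F ∧ A ≤ B} ⊆ {B : Submodule K V | finrank K ↥B = k ∧ A ≤ B} :=
      fun B hB => ⟨hdim B hB.1, hB.2⟩
    exact le_trans (Set.ncard_le_ncard hsub (Set.toFinite _))
      (aux_count_div hq hn hq2 (by omega) (by omega) A (by omega))
  | succ m ih =>
    intro A hA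
    have haτ : finrank K ↥A < τ := by omega
    have hnc : ¬ IsTCover t F A := by
      intro h
      have : tauT t F ≤ finrank K ↥A := Nat.sInf_le ⟨A, rfl, h⟩
      omega
    rw [IsTCover] at hnc
    push_neg at hnc
    obtain ⟨F0, hF0, hdF0⟩ := hnc
    have hdF0k : finrank K ↥F0 = k := hdim F0 hF0
    obtain ⟨d, hd⟩ : ∃ d, d = finrank K ↥(A ⊓ F0) := ⟨_, rfl⟩
    have hdt : d < t := by omega
    obtain ⟨U, hDU, hUF0, hUrank⟩ := aux_exists_between (k - t + 1) (A ⊓ F0) F0 inf_le_right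
      (by rw [hdF0k, ← hd]; omega)
    rw [← hd] at hUrank
    set T : Finset V := {x ∈ (univ : Finset V) | x ∈ U ∧ x ∉ A} with hT
    set g : V → Submodule K V := fun x => A ⊔ Submodule.span K {x} with hg
    set S : Finset (Submodule K V) := T.image g with hS
    have hAU : A ⊓ U = A ⊓ F0 := by
      apply le_antisymm
      · exact le_inf inf_le_left (le_trans inf_le_right hUF0)
      · exact le_inf inf_le_left hDU
    have hdimS : ∀ A' ∈ S, finrank K ↥A' = finrank K ↥A + 1 ∧ A ≤ A' := by
      intro A' hA'
      obtain ⟨x, hx, rfl⟩ := mem_image.1 hA'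
      rw [hT, mem_filter] at hx
      exact ⟨aux_finrank_sup_span hx.2.2, le_sup_left⟩
    -- bound on the number of candidates
    have hcardS : #S ≤ c := by
      have hfib : ∀ A' ∈ T.image g, q ^ (d + 1) - q ^ d ≤ #{x ∈ T | g x = A'} := by
        intro A' hA'
        obtain ⟨x0, hx0, rfl⟩ := mem_image.1 hA'
        rw [hT, mem_filter] at hx0
        obtain ⟨-, hx0U, hx0A⟩ := hx0
        have hgrank : finrank K ↥(g x0) = finrank K ↥A + 1 := aux_finrank_sup_span hx0A
        have hAgU : A ⊓ (g x0 ⊓ U) = A ⊓ F0 := by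
          apply le_antisymm
          · exact le_trans (inf_le_inf_left A inf_le_right) hAU.le
          · exact le_inf inf_le_left (le_inf (le_trans inf_le_left le_sup_left) hDU)
        have hup : finrank K ↥(g x0 ⊓ U) ≤ d + 1 := by
          have h2 := Submodule.finrank_sup_add_finrank_inf_eq (g x0 ⊓ U) A
          have h3 : finrank K ↥((g x0 ⊓ U) ⊔ A) ≤ finrank K ↥A + 1 := by
            rw [← hgrank]
            exact Submodule.finrank_mono (sup_le inf_le_left le_sup_left)
          have h4 : (g x0 ⊓ U) ⊓ A = A ⊓ F0 := by rw [inf_comm]; exact hAgU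
          rw [h4, ← hd] at h2
          omega
        have hlow : d + 1 ≤ finrank K ↥(g x0 ⊓ U) := by
          have hle : (A ⊓ F0) ⊔ Submodule.span K {x0} ≤ g x0 ⊓ U :=
            le_inf (sup_le (le_trans inf_le_left le_sup_left) le_sup_right)
              (sup_le hDU ((Submodule.span_singleton_le_iff_mem x0 U).2 hx0U))
          have h5 : finrank K ↥((A ⊓ F0) ⊔ Submodule.span K {x0}) = d + 1 := by
            rw [aux_finrank_sup_span (fun h => hx0A ((inf_le_left : A ⊓ F0 ≤ A) h)), ← hd]
          rw [← h5]
          exact Submodule.finrank_mono hle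
        have hXd : finrank K ↥(g x0 ⊓ U) = d + 1 := le_antisymm hup hlow
        have hsub2 : {x ∈ (univ : Finset V) | x ∈ g x0 ⊓ U ∧ x ∉ A} ⊆ {x ∈ T | g x = g x0} := by
          intro x hx
          rw [mem_filter] at hx
          obtain ⟨-, hxgU, hxA⟩ := hx
          rw [Submodule.mem_inf] at hxgU
          rw [mem_filter, hT, mem_filter]
          refine ⟨⟨mem_univ x, hxgU.2, hxA⟩, ?_⟩
          apply Submodule.eq_of_le_of_finrank_eq
            (sup_le le_sup_left ((Submodule.span_singleton_le_iff_mem x (g x0)).2 hxgU.1))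
          rw [aux_finrank_sup_span hxA, hgrank]
        have hcnt : #{x ∈ (univ : Finset V) | x ∈ g x0 ⊓ U ∧ x ∉ A} = q ^ (d + 1) - q ^ d := by
          rw [aux_bridge, aux_card_diff A (g x0 ⊓ U), hq, hAgU, hXd, ← hd]
        calc q ^ (d + 1) - q ^ d = #{x ∈ (univ : Finset V) | x ∈ g x0 ⊓ U ∧ x ∉ A} := hcnt.symm
          _ ≤ #{x ∈ T | g x = g x0} := card_le_card hsub2
      have h6 : (q ^ (d + 1) - q ^ d) * #(T.image g) ≤ #T :=
        mul_card_image_le_card T _ hfib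
      have hTcard : #T = q ^ (d + (k - t + 1)) - q ^ d := by
        rw [hT, aux_bridge, aux_card_diff A U, hq, hAU, hUrank, ← hd]
      have h7 : #S * (q - 1) ≤ q ^ (k - t + 1) - 1 := by
        have e1 : q ^ (d + 1) - q ^ d = q ^ d * (q - 1) := by
          rw [Nat.mul_sub, mul_one, ← pow_succ]
        have e2 : q ^ (d + (k - t + 1)) - q ^ d = q ^ d * (q ^ (k - t + 1) - 1) := by
          rw [Nat.mul_sub, mul_one, ← pow_add]
        apply Nat.le_of_mul_le_mul_left ?_ (pow_pos (show 0 < q by omega) d)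
        calc q ^ d * (#S * (q - 1)) = (q ^ d * (q - 1)) * #S := by ring
          _ = (q ^ (d + 1) - q ^ d) * #S := by rw [e1]
          _ ≤ #T := by rw [hS]; exact h6
          _ = q ^ d * (q ^ (k - t + 1) - 1) := by rw [hTcard, e2]
      have hc : c = (q ^ (k - t + 1) - 1) / (q - 1) := by
        rw [hcdef]
        simp [gaussBinom]
      rw [hc, Nat.le_div_iff_mul_le (show 0 < q - 1 by omega)]
      exact h7
    -- the covering step
    have hcover : {B | B ∈ F ∧ A ≤ B} ⊆
        {B | B ∈ F ∧ finrank K ↥(F0 ⊓ B) < t} ∪ ⋃ A' ∈ S, {B | B ∈ F ∧ A' ≤ B} := by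
      rintro B ⟨hBF, hAB⟩
      by_cases hBe : finrank K ↥(F0 ⊓ B) < t
      · exact Or.inl ⟨hBF, hBe⟩
      · push_neg at hBe
        right
        have hXU : d + 1 ≤ finrank K ↥((F0 ⊓ B) ⊓ U) := by
          have h8 := Submodule.finrank_sup_add_finrank_inf_eq (F0 ⊓ B) U
          have h9 : finrank K ↥((F0 ⊓ B) ⊔ U) ≤ k := by
            rw [← hdF0k]
            exact Submodule.finrank_mono (sup_le inf_le_left hUF0)
          omega
        have hex : ∃ x, x ∈ (F0 ⊓ B) ⊓ U ∧ x ∉ A := by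
          by_contra hcon
          push_neg at hcon
          have hle : (F0 ⊓ B) ⊓ U ≤ A ⊓ U := le_inf (fun y hy => hcon y hy) inf_le_right
          have := Submodule.finrank_mono hle
          rw [hAU, ← hd] at this
          omega
        obtain ⟨x, hxXU, hxA⟩ := hex
        have hxU : x ∈ U := (inf_le_right : (F0 ⊓ B) ⊓ U ≤ U) hxXU
        have hxB : x ∈ B :=
          (inf_le_right : F0 ⊓ B ≤ B) ((inf_le_left : (F0 ⊓ B) ⊓ U ≤ F0 ⊓ B) hxXU)
        have hgxS : g x ∈ S := by
          rw [hS]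
          exact mem_image_of_mem g (by rw [hT, mem_filter]; exact ⟨mem_univ x, hxU, hxA⟩)
        exact Set.mem_iUnion.2 ⟨g x, Set.mem_iUnion.2 ⟨hgxS,
          ⟨hBF, sup_le hAB ((Submodule.span_singleton_le_iff_mem x B).2 hxB)⟩⟩⟩
    have hExc : {B | B ∈ F ∧ finrank K ↥(F0 ⊓ B) < t}.ncard ≤ 1 := by
      rcases (hF F0 hF0).eq_empty_or_singleton with h | ⟨B0, h⟩
      · rw [h]; simp
      · rw [h, Set.ncard_singleton]
    calc {B | B ∈ F ∧ A ≤ B}.ncard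
        ≤ ({B | B ∈ F ∧ finrank K ↥(F0 ⊓ B) < t} ∪ ⋃ A' ∈ S, {B | B ∈ F ∧ A' ≤ B}).ncard :=
          Set.ncard_le_ncard hcover (Set.toFinite _)
      _ ≤ {B | B ∈ F ∧ finrank K ↥(F0 ⊓ B) < t}.ncard +
            (⋃ A' ∈ S, {B | B ∈ F ∧ A' ≤ B}).ncard := Set.ncard_union_le _ _
      _ ≤ 1 + ∑ A' ∈ S, {B | B ∈ F ∧ A' ≤ B}.ncard :=
          Nat.add_le_add hExc (hbiUnion S)
      _ ≤ 1 + ∑ _A' ∈ S, (c ^ m * G + ∑ i ∈ range m, c ^ i) := by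
          refine Nat.add_le_add_left (sum_le_sum ?_) 1
          intro A' hA'
          obtain ⟨hA'rank, -⟩ := hdimS A' hA'
          exact ih A' (by omega)
      _ = 1 + #S * (c ^ m * G + ∑ i ∈ range m, c ^ i) := by rw [sum_const, smul_eq_mul]
      _ ≤ 1 + c * (c ^ m * G + ∑ i ∈ range m, c ^ i) :=
          Nat.add_le_add_left (Nat.mul_le_mul_right _ hcardS) 1
      _ = c ^ (m + 1) * G + ∑ i ∈ range (m + 1), c ^ i := by
          rw [geom_sum_succ]
          ring

end Aux

theorem stmt_14 {K V : Type*} [Field K] [Fintype K] [AddCommGroup V] [Module K V]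
    [FiniteDimensional K V] (q n k t : ℕ) (hq : Fintype.card K = q)
    (hn : finrank K V = n) (hk : 0 < k) (ht : 0 < t) (htk : t + 1 ≤ k) (hnk : 2 * k ≤ n)
    (F : Set (Submodule K V)) (hdim : ∀ A ∈ F, finrank K ↥A = k)
    (hF : AlmostTIntersecting t F) (htau : tauT t F ≤ k)
    (A : Submodule K V) (hA : finrank K ↥A < tauT t F) :
    {B | B ∈ F ∧ A ≤ B}.ncard ≤
      gaussBinom q (k - t + 1) 1 ^ (tauT t F - finrank K ↥A) *
          gaussBinom q (n - tauT t F) (k - tauT t F) +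
        ∑ i ∈ Finset.range (tauT t F - finrank K ↥A),
          gaussBinom q (k - t + 1) 1 ^ i := by
  exact aux_main hq hn hk ht htk hnk F hdim hF htau (tauT t F - finrank K ↥A) A (by omega)
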